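/- If $\nu(A)\leq \int_{\mathbb{S}}\int_0^\infty \mathbf{1}_A(s\theta)\,s^{-1-\alpha}\bar{q}(s)\,ds\,\mu(d\theta)$ for all Borel $A$, with $\bar{q}$ bounded nonincreasing satisfying $\bar{q}(s)\leq K\bar{q}(2s)$, and $\mu(B(\theta,r)\cap\mathbb{S})\leq c\,r^{\gamma-1}$ for $\theta\in\mathbb{S}$, $r<1/2$, then there is a constant $C$ such that $\nu(B(x,r))\leq C\,r^{\gamma}|x|^{-\alpha-\gamma}\bar{q}(|x|)$ for all $x\in\mathbb{R}^d\setminus\{0\}$ and $0<r<|x|/2$. -/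

import Mathlib

open MeasureTheory Set

/-- If `ν(A) ≤ ∫_𝕊 ∫_0^∞ 1_A(sθ) s^{-1-α} q(s) ds μ(dθ)` with `q`
bounded nonincreasing and doubling, and `μ(B(θ,r) ∩ 𝕊) ≤ c r^{γ-1}`, then
`ν(B(x,r)) ≤ C r^γ |x|^{-α-γ} q(|x|)` for `x ≠ 0`, `0 < r < |x|/2`. -/
theorem stmt2 (d : ℕ) (hd : 1 ≤ d) (α γ K c : ℝ)
    (hα : α ∈ Set.Ioo (0:ℝ) 2) (hγ : γ ∈ Set.Icc (1:ℝ) d) (hK : 1 ≤ K) (hc : 0 < c)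
    (μ ν : Measure (EuclideanSpace ℝ (Fin d))) [IsFiniteMeasure μ]
    (hμS : μ {x | ‖x‖ ≠ 1} = 0)
    (q : ℝ → ℝ)
    (hqpos : ∀ s, 0 < s → 0 < q s)
    (hqbdd : ∃ B : ℝ, ∀ s, 0 < s → q s ≤ B)
    (hqmono : ∀ s t : ℝ, 0 < s → s ≤ t → q t ≤ q s)
    (hqdbl : ∀ s, 0 < s → q s ≤ K * q (2 * s))
    (hν : ∀ A : Set (EuclideanSpace ℝ (Fin d)), MeasurableSet A →
      ν A ≤ ∫⁻ θ, (∫⁻ s in Ioi (0:ℝ),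
        A.indicator (fun _ => ENNReal.ofReal (s ^ (-1 - α) * q s)) (s • θ)) ∂μ)
    (hμ : ∀ θ : EuclideanSpace ℝ (Fin d), ‖θ‖ = 1 → ∀ r : ℝ, 0 < r → r < 1/2 →
      μ (Metric.ball θ r ∩ {x | ‖x‖ = 1}) ≤ ENNReal.ofReal (c * r ^ (γ - 1))) :
    ∃ C : ℝ, 0 < C ∧ ∀ (x : EuclideanSpace ℝ (Fin d)) (r : ℝ), x ≠ 0 →
      0 < r → r < ‖x‖ / 2 →
      ν (Metric.ball x r)
        ≤ ENNReal.ofReal (C * r ^ γ * ‖x‖ ^ (-α - γ) * q ‖x‖) := by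
  obtain ⟨hα0, hα2⟩ := hα
  obtain ⟨hγ1, hγd⟩ := hγ
  have hK0 : (0:ℝ) < K := lt_of_lt_of_le one_pos hK
  set M : ℝ := (μ Set.univ).toReal with hMdef
  have hM0 : 0 ≤ M := ENNReal.toReal_nonneg
  set c' : ℝ := max c (M * (2:ℝ) ^ ((d:ℝ) - 1)) with hc'def
  have hc'0 : 0 < c' := lt_of_lt_of_le hc (le_max_left _ _)
  refine ⟨c' * K * (2:ℝ) ^ (γ + 1 + α), by positivity, ?_⟩
  intro x r hx hr hrx
  set R : ℝ := ‖x‖ with hRdef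
  have hR : 0 < R := norm_pos_iff.mpr hx
  have hqR : 0 < q R := hqpos R hR
  have hρ0 : 0 < 2 * r / R := by positivity
  set θ₀ : EuclideanSpace ℝ (Fin d) := R⁻¹ • x with hθ₀def
  have hθ₀n : ‖θ₀‖ = 1 := by
    rw [hθ₀def, norm_smul, Real.norm_eq_abs, abs_inv, abs_of_pos hR]
    exact inv_mul_cancel₀ hR.ne'
  -- geometry
  have hgeom : ∀ (θ : EuclideanSpace ℝ (Fin d)), ‖θ‖ = 1 → ∀ s : ℝ, 0 < s →
      s • θ ∈ Metric.ball x r → s ∈ Ioo (R - r) (R + r) ∧ θ ∈ Metric.ball θ₀ (2 * r / R) := by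
    intro θ hθ s hs hmem
    rw [Metric.mem_ball, dist_eq_norm] at hmem
    have hns : ‖s • θ‖ = s := by
      rw [norm_smul, Real.norm_eq_abs, hθ, mul_one, abs_of_pos hs]
    have h1 : |s - R| < r := by
      calc |s - R| = |‖s • θ‖ - ‖x‖| := by rw [hns]
        _ ≤ ‖s • θ - x‖ := abs_norm_sub_norm_le _ _
        _ < r := hmem
    obtain ⟨h1a, h1b⟩ := abs_lt.mp h1
    refine ⟨⟨by linarith, by linarith⟩, ?_⟩
    rw [Metric.mem_ball, dist_eq_norm]
    have h2 : R • (θ - θ₀) = R • θ - x := by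
      rw [smul_sub, hθ₀def, smul_inv_smul₀ hR.ne']
    have h3 : ‖R • θ - x‖ < 2 * r := by
      have he : R • θ - x = (R - s) • θ + (s • θ - x) := by
        rw [sub_smul]; abel
      calc ‖R • θ - x‖ = ‖(R - s) • θ + (s • θ - x)‖ := by rw [he]
        _ ≤ ‖(R - s) • θ‖ + ‖s • θ - x‖ := norm_add_le _ _
        _ = |R - s| + ‖s • θ - x‖ := by rw [norm_smul, Real.norm_eq_abs, hθ, mul_one]
        _ < r + r := by
            have : |R - s| < r := by rw [abs_sub_comm]; exact h1
            linarith [hmem]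
        _ = 2 * r := by ring
    have h4 : R * ‖θ - θ₀‖ = ‖R • θ - x‖ := by
      rw [← h2, norm_smul, Real.norm_eq_abs, abs_of_pos hR]
    rw [lt_div_iff₀ hR]
    calc ‖θ - θ₀‖ * R = R * ‖θ - θ₀‖ := by ring
      _ = ‖R • θ - x‖ := h4
      _ < 2 * r := h3
  set cap : Set (EuclideanSpace ℝ (Fin d)) :=
    Metric.ball θ₀ (2 * r / R) ∩ {y : EuclideanSpace ℝ (Fin d) | ‖y‖ = 1} with hcapdef
  have hcapm : MeasurableSet cap :=
    Metric.isOpen_ball.measurableSet.inter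
      ((isClosed_eq continuous_norm continuous_const).measurableSet)
  set B0r : ℝ := (R / 2) ^ (-1 - α) * (K * q R) with hB0rdef
  have hB0r0 : 0 ≤ B0r :=
    mul_nonneg (Real.rpow_nonneg (by positivity) _) (mul_nonneg hK0.le hqR.le)
  -- pointwise bound on the interval
  have hsb : ∀ s ∈ Ioo (R - r) (R + r), s ^ (-1 - α) * q s ≤ B0r := by
    intro s hs
    have hsR2 : R / 2 ≤ s := by have := hs.1; simp only [mem_Ioo] at hs; linarith [hs.1, hrx]
    have hs0 : 0 < s := lt_of_lt_of_le (by positivity) hsR2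
    have h1 : s ^ (-1 - α) ≤ (R / 2) ^ (-1 - α) :=
      Real.rpow_le_rpow_of_nonpos (by positivity) hsR2 (by linarith)
    have h2 : q s ≤ K * q R := by
      calc q s ≤ q (R / 2) := hqmono (R / 2) s (by positivity) hsR2
        _ ≤ K * q (2 * (R / 2)) := hqdbl (R / 2) (by positivity)
        _ = K * q R := by rw [show 2 * (R / 2) = R by ring]
    exact mul_le_mul h1 h2 (hqpos s hs0).le (Real.rpow_nonneg (by positivity) _)
  have hae : ∀ᵐ θ ∂μ, ‖θ‖ = 1 := by
    rw [ae_iff]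
    exact hμS
  -- main chain
  have hB : (∫⁻ θ, (∫⁻ s in Ioi (0:ℝ),
        (Metric.ball x r).indicator (fun _ => ENNReal.ofReal (s ^ (-1 - α) * q s)) (s • θ)) ∂μ)
      ≤ ∫⁻ θ, cap.indicator (fun _ => ENNReal.ofReal (2 * r) * ENNReal.ofReal B0r) θ ∂μ := by
    refine lintegral_mono_ae (hae.mono ?_)
    intro θ hθ
    by_cases hcap : θ ∈ cap
    · rw [Set.indicator_of_mem hcap]
      calc (∫⁻ s in Ioi (0:ℝ),
            (Metric.ball x r).indicator (fun _ => ENNReal.ofReal (s ^ (-1 - α) * q s)) (s • θ))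
          ≤ ∫⁻ s in Ioi (0:ℝ),
              (Ioo (R - r) (R + r)).indicator (fun _ => ENNReal.ofReal B0r) s := by
            refine setLIntegral_mono (measurable_const.indicator measurableSet_Ioo) ?_
            intro s hs
            by_cases hm : s • θ ∈ Metric.ball x r
            · rw [Set.indicator_of_mem hm]
              obtain ⟨hs1, _⟩ := hgeom θ hθ s hs hm
              rw [Set.indicator_of_mem hs1]
              exact ENNReal.ofReal_le_ofReal (hsb s hs1)
            · rw [Set.indicator_of_notMem hm]; exact zero_le
        _ ≤ ∫⁻ s, (Ioo (R - r) (R + r)).indicator (fun _ => ENNReal.ofReal B0r) s :=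
            setLIntegral_le_lintegral _ _
        _ = ENNReal.ofReal B0r * volume (Ioo (R - r) (R + r)) :=
            lintegral_indicator_const measurableSet_Ioo _
        _ = ENNReal.ofReal (2 * r) * ENNReal.ofReal B0r := by
            rw [Real.volume_Ioo, show R + r - (R - r) = 2 * r by ring, mul_comm]
    · rw [Set.indicator_of_notMem hcap]
      have hz : (∫⁻ s in Ioi (0:ℝ),
          (Metric.ball x r).indicator (fun _ => ENNReal.ofReal (s ^ (-1 - α) * q s)) (s • θ))
          ≤ ∫⁻ _s in Ioi (0:ℝ), (0:ENNReal) := by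
        refine setLIntegral_mono measurable_const ?_
        intro s hs
        have hm : s • θ ∉ Metric.ball x r := by
          intro hm
          exact hcap ⟨(hgeom θ hθ s hs hm).2, hθ⟩
        rw [Set.indicator_of_notMem hm]
      simpa using hz
  have hcapμ : μ cap ≤ ENNReal.ofReal (c' * (2 * r / R) ^ (γ - 1)) := by
    rcases lt_or_ge (2 * r / R) (1 / 2) with h | h
    · calc μ cap ≤ ENNReal.ofReal (c * (2 * r / R) ^ (γ - 1)) := hμ θ₀ hθ₀n _ hρ0 h
        _ ≤ _ := ENNReal.ofReal_le_ofReal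
            (mul_le_mul_of_nonneg_right (le_max_left _ _) (Real.rpow_nonneg hρ0.le _))
    · have hMle : M ≤ c' * (2 * r / R) ^ (γ - 1) := by
        have hd1 : (1:ℝ) ≤ (d:ℝ) := by exact_mod_cast hd
        have e1 : ((1:ℝ)/2) ^ (γ - 1) ≤ (2 * r / R) ^ (γ - 1) :=
          Real.rpow_le_rpow (by norm_num) h (by linarith)
        have e2 : ((1:ℝ)/2) ^ (γ - 1) = (2:ℝ) ^ (1 - γ) := by
          rw [one_div, Real.inv_rpow (by norm_num), ← Real.rpow_neg (by norm_num)]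
          congr 1
          ring
        have e3 : (2:ℝ) ^ ((1:ℝ) - (d:ℝ)) ≤ (2:ℝ) ^ (1 - γ) :=
          Real.rpow_le_rpow_of_exponent_le one_le_two (by linarith)
        have e4 : M * (2:ℝ) ^ ((d:ℝ) - 1) * (2:ℝ) ^ ((1:ℝ) - (d:ℝ)) = M := by
          rw [mul_assoc, ← Real.rpow_add (by norm_num)]
          norm_num
        calc M = M * (2:ℝ) ^ ((d:ℝ) - 1) * (2:ℝ) ^ ((1:ℝ) - (d:ℝ)) := e4.symm
          _ ≤ c' * (2 * r / R) ^ (γ - 1) := by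
              apply mul_le_mul (le_max_right _ _)
              · calc (2:ℝ) ^ ((1:ℝ) - (d:ℝ)) ≤ (2:ℝ) ^ (1 - γ) := e3
                  _ = ((1:ℝ)/2) ^ (γ - 1) := e2.symm
                  _ ≤ (2 * r / R) ^ (γ - 1) := e1
              · positivity
              · exact hc'0.le
      calc μ cap ≤ μ Set.univ := measure_mono (subset_univ _)
        _ = ENNReal.ofReal M := (ENNReal.ofReal_toReal (measure_ne_top μ _)).symm
        _ ≤ _ := ENNReal.ofReal_le_ofReal hMle
  -- rpow algebra
  have e1 : ((R/2):ℝ) ^ (-1 - α) = R ^ (-1 - α) * 2 ^ (1 + α) := by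
    rw [Real.div_rpow hR.le (by norm_num : (0:ℝ) ≤ 2), div_eq_mul_inv,
      ← Real.rpow_neg (by norm_num : (0:ℝ) ≤ 2)]
    congr 1
    ring
  have e2 : ((2 * r / R):ℝ) ^ (γ - 1) = 2 ^ (γ - 1) * r ^ (γ - 1) * R ^ (1 - γ) := by
    rw [Real.div_rpow (by positivity) hR.le, Real.mul_rpow (by norm_num) hr.le,
      div_eq_mul_inv, ← Real.rpow_neg hR.le, show -(γ - 1) = 1 - γ by ring]
  have e3 : r ^ γ = r ^ (1:ℝ) * r ^ (γ - 1) := by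
    rw [← Real.rpow_add hr]
    congr 1
    ring
  have e4 : R ^ (-α - γ) = R ^ (-1 - α) * R ^ (1 - γ) := by
    rw [← Real.rpow_add hR]
    congr 1
    ring
  have e5 : (2:ℝ) ^ (γ + 1 + α) = 2 ^ (1:ℝ) * (2 ^ (1 + α) * 2 ^ (γ - 1)) := by
    rw [← Real.rpow_add (by norm_num : (0:ℝ) < 2), ← Real.rpow_add (by norm_num : (0:ℝ) < 2)]
    congr 1
    ring
  have key : 2 * r * B0r * (c' * (2 * r / R) ^ (γ - 1))
      = c' * K * (2:ℝ) ^ (γ + 1 + α) * r ^ γ * R ^ (-α - γ) * q R := by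
    rw [hB0rdef, e1, e2, e3, e4, e5, Real.rpow_one, Real.rpow_one]
    ring
  calc ν (Metric.ball x r)
      ≤ ∫⁻ θ, (∫⁻ s in Ioi (0:ℝ),
          (Metric.ball x r).indicator (fun _ => ENNReal.ofReal (s ^ (-1 - α) * q s)) (s • θ)) ∂μ :=
        hν _ Metric.isOpen_ball.measurableSet
    _ ≤ ∫⁻ θ, cap.indicator (fun _ => ENNReal.ofReal (2 * r) * ENNReal.ofReal B0r) θ ∂μ := hB
    _ = ENNReal.ofReal (2 * r) * ENNReal.ofReal B0r * μ cap :=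
        lintegral_indicator_const hcapm _
    _ ≤ ENNReal.ofReal (2 * r) * ENNReal.ofReal B0r
          * ENNReal.ofReal (c' * (2 * r / R) ^ (γ - 1)) := by
        exact mul_le_mul_right hcapμ _
    _ = ENNReal.ofReal (2 * r * B0r * (c' * (2 * r / R) ^ (γ - 1))) := by
        rw [← ENNReal.ofReal_mul (by positivity), ← ENNReal.ofReal_mul (by positivity)]
    _ = ENNReal.ofReal (c' * K * (2:ℝ) ^ (γ + 1 + α) * r ^ γ * R ^ (-α - γ) * q R) := by
        rw [key]
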